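/- Fix L ≥ 1 and let S_L = {(ℓ,i) : 1 ≤ ℓ ≤ L, i odd, 1 ≤ i ≤ 2^ℓ − 1}, with associated points x_{ℓ,i} = i·2^{−ℓ} ∈ (0,1) and the linear (lexicographic) order (ℓ,i) ≤ (ℓ',i') iff ℓ < ℓ' or (ℓ = ℓ' and i ≤ i'). Let p, q : (0,1) → ℝ be strictly positive with p/q strictly increasing, set k(x,y) = p(min(x,y))·q(max(x,y)), and let K be the S_L × S_L matrix with entries K_{(ℓ,i),(ℓ',i')} = k(x_{ℓ,i}, x_{ℓ',i'}). Then there exists an S_L × S_L matrix C that is upper triangular with respect to the lexicographic order, has strictly positive diagonal entries, has at most 3 nonzero entries in each column, and satisfies Cᵀ·K·C = I. In particular the total number of nonzero entries of C is at most 3·|S_L|. -/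

import Mathlib

open Finset Matrix


open Finset Matrix

private lemma markov_column_exists {ι : Type*} [Fintype ι] [DecidableEq ι]
    (key : ι → ℕ) (ptv : ι → ℝ)
    (hinj : ∀ a b : ι, ptv a = ptv b → a = b)
    (hmem : ∀ a : ι, ptv a ∈ Set.Ioo (0:ℝ) 1)
    (p q : ℝ → ℝ)
    (hp : ∀ x ∈ Set.Ioo (0 : ℝ) 1, 0 < p x)
    (hq : ∀ x ∈ Set.Ioo (0 : ℝ) 1, 0 < q x)
    (hpq : StrictMonoOn (fun x => p x / q x) (Set.Ioo (0 : ℝ) 1))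
    (K : Matrix ι ι ℝ)
    (hK : ∀ a b : ι, K a b = p (min (ptv a) (ptv b)) * q (max (ptv a) (ptv b)))
    (b : ι) :
    ∃ (v : ι → ℝ) (F : Finset ι),
      v b = 1 ∧ (∀ a, v a ≠ 0 → a ∈ F) ∧ F.card ≤ 3 ∧
      (∀ a ∈ F, a = b ∨ key a < key b) ∧
      (∀ a : ι, key a < key b → ∑ j, K a j * v j = 0) ∧
      0 < ∑ j, K b j * v j := by
  classical
  have ppos : ∀ x : ι, 0 < p (ptv x) := fun x => hp _ (hmem x)
  have qpos : ∀ x : ι, 0 < q (ptv x) := fun x => hq _ (hmem x)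
  have cross : ∀ x y : ι, ptv x < ptv y →
      p (ptv x) * q (ptv y) < p (ptv y) * q (ptv x) := by
    intro x y hxy
    have h := hpq (hmem x) (hmem y) hxy
    exact (div_lt_div_iff₀ (qpos x) (qpos y)).mp h
  have kval : ∀ u w : ι, ptv u ≤ ptv w → K u w = p (ptv u) * q (ptv w) := by
    intro u w h; rw [hK, min_eq_left h, max_eq_right h]
  have ksymm : ∀ u w : ι, K u w = K w u := by
    intro u w; rw [hK, hK, min_comm, max_comm]
  set Lb := univ.filter (fun a : ι => key a < key b ∧ ptv a < ptv b) with hLbdef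
  set Rb := univ.filter (fun a : ι => key a < key b ∧ ptv b < ptv a) with hRbdef
  have hsplit : ∀ a : ι, key a < key b → a ∈ Lb ∨ a ∈ Rb := by
    intro a ha
    have hne : ptv a ≠ ptv b := by
      intro h
      have := hinj a b h
      subst this
      exact lt_irrefl _ ha
    rcases hne.lt_or_gt with h | h
    · left; simp [hLbdef, ha, h]
    · right; simp [hRbdef, ha, h]
  by_cases hL : Lb.Nonempty <;> by_cases hR : Rb.Nonempty
  · -- both a left and a right earlier neighbour exist
    obtain ⟨l, hlmem, hlmax⟩ := Finset.exists_max_image Lb ptv hL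
    obtain ⟨r, hrmem, hrmin⟩ := Finset.exists_min_image Rb ptv hR
    have hlkey : key l < key b := (Finset.mem_filter.mp hlmem).2.1
    have hrkey : key r < key b := (Finset.mem_filter.mp hrmem).2.1
    have hlb : ptv l < ptv b := (Finset.mem_filter.mp hlmem).2.2
    have hbr : ptv b < ptv r := (Finset.mem_filter.mp hrmem).2.2
    have hbl : b ≠ l := fun h => absurd (h ▸ hlb) (lt_irrefl _)
    have hbr' : b ≠ r := fun h => absurd (h ▸ hbr) (lt_irrefl _)
    have hD : 0 < p (ptv r) * q (ptv l) - p (ptv l) * q (ptv r) :=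
      sub_pos.mpr (cross l r (hlb.trans hbr))
    set cl : ℝ := -((p (ptv r) * q (ptv b) - p (ptv b) * q (ptv r)) /
      (p (ptv r) * q (ptv l) - p (ptv l) * q (ptv r))) with hcl
    set cr : ℝ := -((p (ptv b) * q (ptv l) - p (ptv l) * q (ptv b)) /
      (p (ptv r) * q (ptv l) - p (ptv l) * q (ptv r))) with hcr
    set v : ι → ℝ := fun j =>
      (if j = b then 1 else 0) + (if j = l then cl else 0) + (if j = r then cr else 0) with hv
    have hvb : v b = 1 := by simp [hv, Ne.symm hbl, Ne.symm hbr', hbl, hbr']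
    have hsum : ∀ a : ι, ∑ j, K a j * v j = K a b + K a l * cl + K a r * cr := by
      intro a
      simp [hv, mul_add, mul_ite, mul_one, mul_zero, Finset.sum_add_distrib,
        Finset.sum_ite_eq']
    refine ⟨v, {b, l, r}, hvb, ?_, ?_, ?_, ?_, ?_⟩
    · intro a ha
      simp only [Finset.mem_insert, Finset.mem_singleton]
      by_contra h
      push_neg at h
      exact ha (by simp [hv, h.1, h.2.1, h.2.2])
    · have h1 := Finset.card_insert_le b ({l, r} : Finset ι)
      have h2 := Finset.card_insert_le l ({r} : Finset ι)
      simp only [Finset.card_singleton] at h2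
      omega
    · intro a ha
      rcases Finset.mem_insert.mp ha with rfl | ha
      · exact Or.inl rfl
      rcases Finset.mem_insert.mp ha with rfl | ha
      · exact Or.inr hlkey
      · exact Or.inr ((Finset.mem_singleton.mp ha) ▸ hrkey)
    · intro a ha
      rw [hsum]
      rcases hsplit a ha with h | h
      · have hal : ptv a ≤ ptv l := hlmax a h
        have hab : ptv a < ptv b := (Finset.mem_filter.mp h).2.2
        have har : ptv a ≤ ptv r := le_of_lt (hab.trans hbr)
        rw [kval a b hab.le, kval a l hal, kval a r har, hcl, hcr]
        linear_combination (-(p (ptv a) * q (ptv b))) * mul_inv_cancel₀ hD.ne'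
      · have hra : ptv r ≤ ptv a := hrmin a h
        have hba : ptv b < ptv a := (Finset.mem_filter.mp h).2.2
        have hla : ptv l ≤ ptv a := le_of_lt (hlb.trans hba)
        rw [ksymm a b, ksymm a l, ksymm a r,
          kval b a hba.le, kval l a hla, kval r a hra, hcl, hcr]
        field_simp
        ring
    · rw [hsum b]
      have hKbb : K b b = p (ptv b) * q (ptv b) := by rw [hK]; simp
      rw [hKbb, ksymm b l, kval l b hlb.le, kval b r hbr.le, hcl, hcr]
      have hval : p (ptv b) * q (ptv b) +
          p (ptv l) * q (ptv b) *
            (-((p (ptv r) * q (ptv b) - p (ptv b) * q (ptv r)) /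
              (p (ptv r) * q (ptv l) - p (ptv l) * q (ptv r)))) +
          p (ptv b) * q (ptv r) *
            (-((p (ptv b) * q (ptv l) - p (ptv l) * q (ptv b)) /
              (p (ptv r) * q (ptv l) - p (ptv l) * q (ptv r)))) =
          ((p (ptv r) * q (ptv b) - p (ptv b) * q (ptv r)) *
            (p (ptv b) * q (ptv l) - p (ptv l) * q (ptv b))) /
            (p (ptv r) * q (ptv l) - p (ptv l) * q (ptv r)) := by
        field_simp
        ring
      rw [hval]
      exact div_pos (mul_pos (sub_pos.mpr (cross b r hbr)) (sub_pos.mpr (cross l b hlb))) hD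
  · -- only a left earlier neighbour exists
    obtain ⟨l, hlmem, hlmax⟩ := Finset.exists_max_image Lb ptv hL
    have hlkey : key l < key b := (Finset.mem_filter.mp hlmem).2.1
    have hlb : ptv l < ptv b := (Finset.mem_filter.mp hlmem).2.2
    have hbl : b ≠ l := fun h => absurd (h ▸ hlb) (lt_irrefl _)
    set cl : ℝ := -(q (ptv b) / q (ptv l)) with hcl
    set v : ι → ℝ := fun j => (if j = b then 1 else 0) + (if j = l then cl else 0) with hv
    have hvb : v b = 1 := by simp [hv, hbl]
    have hsum : ∀ a : ι, ∑ j, K a j * v j = K a b + K a l * cl := by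
      intro a
      simp [hv, mul_add, mul_ite, mul_one, mul_zero, Finset.sum_add_distrib,
        Finset.sum_ite_eq']
    refine ⟨v, {b, l}, hvb, ?_, ?_, ?_, ?_, ?_⟩
    · intro a ha
      simp only [Finset.mem_insert, Finset.mem_singleton]
      by_contra h
      push_neg at h
      exact ha (by simp [hv, h.1, h.2])
    · have h1 := Finset.card_insert_le b ({l} : Finset ι)
      simp only [Finset.card_singleton] at h1
      omega
    · intro a ha
      rcases Finset.mem_insert.mp ha with rfl | ha
      · exact Or.inl rfl
      · exact Or.inr ((Finset.mem_singleton.mp ha) ▸ hlkey)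
    · intro a ha
      rw [hsum]
      rcases hsplit a ha with h | h
      · have hal : ptv a ≤ ptv l := hlmax a h
        have hab : ptv a < ptv b := (Finset.mem_filter.mp h).2.2
        rw [kval a b hab.le, kval a l hal, hcl]
        field_simp [(qpos l).ne']
        ring
      · exact absurd ⟨a, h⟩ hR
    · rw [hsum b]
      have hKbb : K b b = p (ptv b) * q (ptv b) := by rw [hK]; simp
      rw [hKbb, ksymm b l, kval l b hlb.le, hcl]
      have hval : p (ptv b) * q (ptv b) +
          p (ptv l) * q (ptv b) * (-(q (ptv b) / q (ptv l))) =
          q (ptv b) * (p (ptv b) * q (ptv l) - p (ptv l) * q (ptv b)) / q (ptv l) := by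
        field_simp [(qpos l).ne']
        ring
      rw [hval]
      exact div_pos (mul_pos (qpos b) (sub_pos.mpr (cross l b hlb))) (qpos l)
  · -- only a right earlier neighbour exists
    obtain ⟨r, hrmem, hrmin⟩ := Finset.exists_min_image Rb ptv hR
    have hrkey : key r < key b := (Finset.mem_filter.mp hrmem).2.1
    have hbr : ptv b < ptv r := (Finset.mem_filter.mp hrmem).2.2
    have hbr' : b ≠ r := fun h => absurd (h ▸ hbr) (lt_irrefl _)
    set cr : ℝ := -(p (ptv b) / p (ptv r)) with hcr
    set v : ι → ℝ := fun j => (if j = b then 1 else 0) + (if j = r then cr else 0) with hv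
    have hvb : v b = 1 := by simp [hv, hbr']
    have hsum : ∀ a : ι, ∑ j, K a j * v j = K a b + K a r * cr := by
      intro a
      simp [hv, mul_add, mul_ite, mul_one, mul_zero, Finset.sum_add_distrib,
        Finset.sum_ite_eq']
    refine ⟨v, {b, r}, hvb, ?_, ?_, ?_, ?_, ?_⟩
    · intro a ha
      simp only [Finset.mem_insert, Finset.mem_singleton]
      by_contra h
      push_neg at h
      exact ha (by simp [hv, h.1, h.2])
    · have h1 := Finset.card_insert_le b ({r} : Finset ι)
      simp only [Finset.card_singleton] at h1
      omega
    · intro a ha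
      rcases Finset.mem_insert.mp ha with rfl | ha
      · exact Or.inl rfl
      · exact Or.inr ((Finset.mem_singleton.mp ha) ▸ hrkey)
    · intro a ha
      rw [hsum]
      rcases hsplit a ha with h | h
      · exact absurd ⟨a, h⟩ hL
      · have hra : ptv r ≤ ptv a := hrmin a h
        have hba : ptv b < ptv a := (Finset.mem_filter.mp h).2.2
        rw [ksymm a b, ksymm a r, kval b a hba.le, kval r a hra, hcr]
        field_simp [(ppos r).ne']
        ring
    · rw [hsum b]
      have hKbb : K b b = p (ptv b) * q (ptv b) := by rw [hK]; simp
      rw [hKbb, kval b r hbr.le, hcr]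
      have hval : p (ptv b) * q (ptv b) +
          p (ptv b) * q (ptv r) * (-(p (ptv b) / p (ptv r))) =
          p (ptv b) * (p (ptv r) * q (ptv b) - p (ptv b) * q (ptv r)) / p (ptv r) := by
        field_simp [(ppos r).ne']
        ring
      rw [hval]
      exact div_pos (mul_pos (ppos b) (sub_pos.mpr (cross b r hbr))) (ppos r)
  · -- no earlier neighbours at all
    refine ⟨fun j => if j = b then 1 else 0, {b}, by simp, ?_, by simp, ?_, ?_, ?_⟩
    · intro a ha
      simp only [Finset.mem_singleton]
      by_contra h
      exact ha (if_neg h)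
    · intro a ha
      exact Or.inl (Finset.mem_singleton.mp ha)
    · intro a ha
      rcases hsplit a ha with h | h
      · exact absurd ⟨a, h⟩ hL
      · exact absurd ⟨a, h⟩ hR
    · have : (∑ j, K b j * if j = b then (1:ℝ) else 0) = K b b := by
        simp [mul_ite, mul_one, mul_zero, Finset.sum_ite_eq']
      rw [this, hK]
      simp only [min_self, max_self]
      exact mul_pos (ppos b) (qpos b)

/-- Let `S_L` be the set of dyadic level-index pairs `(ℓ,i)` with
`1 ≤ ℓ ≤ L`, `i` odd, `1 ≤ i ≤ 2^ℓ - 1`, with points `x_{ℓ,i} = i·2^{-ℓ}`, and let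
`K` be the Markov-kernel matrix on these points. Then there is a matrix `C`, upper
triangular for the lexicographic order on `(ℓ,i)`, with strictly positive diagonal,
at most `3` nonzero entries per column, and `Cᵀ K C = 1`; in particular `C` has at
most `3·|S_L|` nonzero entries. -/
theorem dyadic_inverse_cholesky_sparse
    (L : ℕ) (hL : 1 ≤ L)
    (p q : ℝ → ℝ)
    (hp : ∀ x ∈ Set.Ioo (0 : ℝ) 1, 0 < p x)
    (hq : ∀ x ∈ Set.Ioo (0 : ℝ) 1, 0 < q x)
    (hpq : StrictMonoOn (fun x => p x / q x) (Set.Ioo (0 : ℝ) 1))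
    (S : Finset (ℕ × ℕ))
    (hS : ∀ v : ℕ × ℕ, v ∈ S ↔ 1 ≤ v.1 ∧ v.1 ≤ L ∧ Odd v.2 ∧ 1 ≤ v.2 ∧ v.2 ≤ 2 ^ v.1 - 1)
    (pt : ℕ × ℕ → ℝ) (hpt : ∀ v, pt v = (v.2 : ℝ) / 2 ^ v.1)
    (K : Matrix ↥S ↥S ℝ)
    (hK : ∀ a b : ↥S, K a b = p (min (pt a.1) (pt b.1)) * q (max (pt a.1) (pt b.1))) :
    ∃ C : Matrix ↥S ↥S ℝ,
      (∀ a b : ↥S, (b.1.1 < a.1.1 ∨ (b.1.1 = a.1.1 ∧ b.1.2 < a.1.2)) → C a b = 0) ∧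
      (∀ a : ↥S, 0 < C a a) ∧
      (∀ b : ↥S, (Finset.univ.filter fun a : ↥S => C a b ≠ 0).card ≤ 3) ∧
      Cᵀ * K * C = 1 ∧
      (Finset.univ.filter fun ab : ↥S × ↥S => C ab.1 ab.2 ≠ 0).card ≤ 3 * S.card := by
  classical
  have hbounds : ∀ a : ↥S, 1 ≤ a.1.1 ∧ a.1.1 ≤ L ∧ Odd a.1.2 ∧ 1 ≤ a.1.2 ∧
      a.1.2 ≤ 2 ^ a.1.1 - 1 := fun a => (hS a.1).mp a.2
  set key : ↥S → ℕ := fun v => 2 ^ v.1.1 + v.1.2 with hkeydef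
  have hpow : ∀ a : ↥S, a.1.2 < 2 ^ a.1.1 := by
    intro a
    have h := (hbounds a).2.2.2.2
    have h1 : 1 ≤ 2 ^ a.1.1 := Nat.one_le_two_pow
    omega
  have keymono : ∀ a c : ↥S, (a.1.1 < c.1.1 ∨ (a.1.1 = c.1.1 ∧ a.1.2 < c.1.2)) →
      key a < key c := by
    intro a c h
    rcases h with h | ⟨h1, h2⟩
    · calc key a = 2 ^ a.1.1 + a.1.2 := rfl
        _ < 2 ^ a.1.1 + 2 ^ a.1.1 := Nat.add_lt_add_left (hpow a) _
        _ = 2 ^ (a.1.1 + 1) := by rw [pow_succ]; ring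
        _ ≤ 2 ^ c.1.1 := Nat.pow_le_pow_right (by norm_num) h
        _ ≤ key c := Nat.le_add_right _ _
    · simp only [hkeydef, h1]
      exact Nat.add_lt_add_left h2 _
  have keyinj : ∀ a c : ↥S, key a = key c → a = c := by
    intro a c h
    have hlv : a.1.1 = c.1.1 := by
      by_contra hne
      rcases Nat.lt_or_ge a.1.1 c.1.1 with hlt | hge
      · exact (ne_of_lt (keymono a c (Or.inl hlt))) h
      · have hlt : c.1.1 < a.1.1 := by omega
        exact (ne_of_lt (keymono c a (Or.inl hlt))) h.symm
    have hi : a.1.2 = c.1.2 := by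
      simp only [hkeydef, hlv] at h
      exact Nat.add_left_cancel h
    exact Subtype.ext (Prod.ext hlv hi)
  have ptinj : ∀ a c : ↥S, pt a.1 = pt c.1 → a = c := by
    intro a c h
    rw [hpt, hpt] at h
    have h2 : (a.1.2 : ℝ) * 2 ^ c.1.1 = (c.1.2 : ℝ) * 2 ^ a.1.1 := by
      field_simp at h
      linarith
    have hnat : a.1.2 * 2 ^ c.1.1 = c.1.2 * 2 ^ a.1.1 := by exact_mod_cast h2
    have key : ∀ u w : ↥S, u.1.1 < w.1.1 → u.1.2 * 2 ^ w.1.1 = w.1.2 * 2 ^ u.1.1 → False := by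
      intro u w hlt heq
      have hsplit : u.1.2 * 2 ^ w.1.1 = (u.1.2 * 2 ^ (w.1.1 - u.1.1)) * 2 ^ u.1.1 := by
        rw [mul_assoc, ← pow_add]
        congr 2
        omega
      rw [hsplit] at heq
      have heq2 : w.1.2 = u.1.2 * 2 ^ (w.1.1 - u.1.1) :=
        (Nat.eq_of_mul_eq_mul_right ((by positivity)) heq).symm
      have hodd := (hbounds w).2.2.1
      rw [Nat.odd_iff] at hodd
      have hdvd : 2 ∣ 2 ^ (w.1.1 - u.1.1) := dvd_pow_self 2 (by omega)
      obtain ⟨k, hk⟩ := hdvd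
      rw [heq2, hk, show u.1.2 * (2 * k) = 2 * (u.1.2 * k) from by ring] at hodd
      simp [Nat.mul_mod_right] at hodd
    have hlv : a.1.1 = c.1.1 := by
      by_contra hne
      rcases Nat.lt_or_ge a.1.1 c.1.1 with hlt | hge
      · exact key a c hlt hnat
      · exact key c a (by omega) hnat.symm
    have hi : a.1.2 = c.1.2 := by
      rw [hlv] at hnat
      exact Nat.eq_of_mul_eq_mul_right ((by positivity)) hnat
    exact Subtype.ext (Prod.ext hlv hi)
  have ptmem : ∀ a : ↥S, pt a.1 ∈ Set.Ioo (0:ℝ) 1 := by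
    intro a
    rw [hpt]
    constructor
    · apply div_pos
      · exact_mod_cast Nat.pos_of_ne_zero (by have := (hbounds a).2.2.2.1; omega)
      · positivity
    · rw [div_lt_one (by positivity)]
      exact_mod_cast hpow a
  choose v F hv1 hv2 hv3 hv4 hv5 hv6 using
    markov_column_exists key (fun a : ↥S => pt a.1) ptinj ptmem p q hp hq hpq K hK
  set s : ↥S → ℝ := fun c => ∑ j, K c j * v c j with hsdef
  have hs : ∀ c, 0 < s c := fun c => hv6 c
  have hsq : ∀ c, 0 < Real.sqrt (s c) := fun c => Real.sqrt_pos.mpr (hs c)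
  set C : Matrix ↥S ↥S ℝ := fun a c => v c a / Real.sqrt (s c) with hCdef
  have hCzero : ∀ a c : ↥S, v c a = 0 → C a c = 0 := by
    intro a c h
    simp [hCdef, h]
  have hcol : ∀ c : ↥S, (Finset.univ.filter fun a : ↥S => C a c ≠ 0).card ≤ 3 := by
    intro c
    refine le_trans (Finset.card_le_card ?_) (hv3 c)
    intro a ha
    simp only [Finset.mem_filter, Finset.mem_univ, true_and] at ha
    exact hv2 c a fun h => ha (hCzero a c h)
  refine ⟨C, ?_, ?_, hcol, ?_, ?_⟩
  · intro a c hlex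
    have hkc : key c < key a := keymono c a hlex
    apply hCzero
    by_contra h
    rcases hv4 c a (hv2 c a h) with rfl | hlt
    · exact lt_irrefl _ hkc
    · exact lt_asymm hkc hlt
  · intro a
    show 0 < v a a / Real.sqrt (s a)
    rw [hv1 a]
    exact div_pos one_pos (hsq a)
  · -- C^T K C = 1
    have ksymm : ∀ u w : ↥S, K u w = K w u := by
      intro u w; rw [hK, hK, min_comm, max_comm]
    have hzero : ∀ a c : ↥S, key a < key c →
        ∑ i, ∑ j, v a i * K i j * v c j = 0 := by
      intro a c h
      refine Finset.sum_eq_zero fun i _ => ?_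
      by_cases hvi : v a i = 0
      · simp [hvi]
      · have hik : key i < key c := by
          rcases hv4 a i (hv2 a i hvi) with rfl | hlt
          · exact h
          · exact hlt.trans h
        calc ∑ j, v a i * K i j * v c j = v a i * ∑ j, K i j * v c j := by
              rw [Finset.mul_sum]
              exact Finset.sum_congr rfl fun j _ => by ring
          _ = 0 := by rw [hv5 c i hik, mul_zero]
    have hdiag : ∀ a : ↥S, ∑ i, ∑ j, v a i * K i j * v a j = s a := by
      intro a
      have hmain : ∀ i ∈ Finset.univ, i ≠ a → ∑ j, v a i * K i j * v a j = 0 := by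
        intro i _ hne
        by_cases hvi : v a i = 0
        · simp [hvi]
        · have hik : key i < key a := by
            rcases hv4 a i (hv2 a i hvi) with rfl | hlt
            · exact absurd rfl hne
            · exact hlt
          calc ∑ j, v a i * K i j * v a j = v a i * ∑ j, K i j * v a j := by
                rw [Finset.mul_sum]
                exact Finset.sum_congr rfl fun j _ => by ring
            _ = 0 := by rw [hv5 a i hik, mul_zero]
      calc ∑ i, ∑ j, v a i * K i j * v a j = ∑ j, v a a * K a j * v a j :=
            Finset.sum_eq_single_of_mem a (Finset.mem_univ a) hmain
        _ = v a a * ∑ j, K a j * v a j := by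
            rw [Finset.mul_sum]
            exact Finset.sum_congr rfl fun j _ => by ring
        _ = s a := by rw [hv1 a, one_mul]
    ext a c
    have expand : (Cᵀ * K * C) a c =
        (Real.sqrt (s a))⁻¹ * (Real.sqrt (s c))⁻¹ * ∑ i, ∑ j, v a i * K i j * v c j := by
      simp only [Matrix.mul_apply, Matrix.transpose_apply, Finset.sum_mul, Finset.mul_sum]
      rw [Finset.sum_comm]
      refine Finset.sum_congr rfl fun i _ => Finset.sum_congr rfl fun j _ => ?_
      show C i a * K i j * C j c = _
      simp only [hCdef]
      ring
    rw [expand]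
    rcases lt_trichotomy (key a) (key c) with h | h | h
    · have hne : a ≠ c := fun h' => (ne_of_lt h) (by rw [h'])
      rw [hzero a c h, mul_zero, Matrix.one_apply_ne hne]
    · have hac : a = c := keyinj a c h
      subst hac
      rw [hdiag a, Matrix.one_apply_eq]
      have h1 : Real.sqrt (s a) * Real.sqrt (s a) = s a := Real.mul_self_sqrt (hs a).le
      field_simp [(hsq a).ne']
      linarith
    · have hne : a ≠ c := fun h' => (ne_of_lt h) (by rw [h'])
      have hswap : ∑ i, ∑ j, v a i * K i j * v c j = ∑ i, ∑ j, v c i * K i j * v a j := by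
        rw [Finset.sum_comm]
        refine Finset.sum_congr rfl fun i _ => Finset.sum_congr rfl fun j _ => ?_
        rw [ksymm j i]
        ring
      rw [hswap, hzero c a h, mul_zero, Matrix.one_apply_ne hne]
  · -- total count
    have hfib := Finset.card_eq_sum_card_fiberwise
      (f := fun ab : ↥S × ↥S => ab.2)
      (s := Finset.univ.filter fun ab : ↥S × ↥S => C ab.1 ab.2 ≠ 0)
      (t := Finset.univ) (fun x _ => Finset.mem_univ _)
    rw [hfib]
    calc ∑ c ∈ (Finset.univ : Finset ↥S),
          ((Finset.univ.filter fun ab : ↥S × ↥S => C ab.1 ab.2 ≠ 0).filter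
            fun ab => ab.2 = c).card
        ≤ ∑ _c ∈ (Finset.univ : Finset ↥S), 3 := by
          refine Finset.sum_le_sum fun c _ => ?_
          refine le_trans
            (Finset.card_le_card_of_injOn (fun ab => ab.1) ?_ ?_) (hcol c)
          · intro ab hab
            simp only [Finset.mem_coe, Finset.mem_filter, Finset.mem_univ, true_and] at hab ⊢
            exact hab.2 ▸ hab.1
          · intro x hx y hy hxy
            simp only [Finset.coe_filter, Set.mem_setOf_eq] at hx hy
            exact Prod.ext hxy (hx.2.trans hy.2.symm)
      _ = 3 * S.card := by
          rw [Finset.sum_const, smul_eq_mul, Finset.card_univ, Fintype.card_coe, mul_comm]
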